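/- Fix σ > 0 and set δ = min{1, 1/(4σ²)}. Let g̃_σ be a probability density on ℝ that is σ-subgaussian with mean zero, bounded, and monotonically decreasing as its argument moves away from zero in either direction. Then there exists a constant c > 0 such that g̃_σ(t) ≤ c · exp(2δ|t| − δ² − log δ) · φ̃_σ(t) for all t ∈ ℝ, where φ̃_σ is the density of the one-dimensional Gaussian N(0, σ²). -/

import Mathlib

open MeasureTheory ProbabilityTheory ENNReal Filter Topology

noncomputable section



lemma exp_intervalIntegral (α a b : ℝ) (hα : α ≠ 0) : ∫ s in a..b, Real.exp (α * s) =
    (Real.exp (α * b) - Real.exp (α * a)) / α := by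
  have h : ∀ x ∈ Set.uIcc a b, HasDerivAt (fun y => Real.exp (α * y) / α) (Real.exp (α * x)) x := by
    intro x _
    have h1 := ((hasDerivAt_id x).const_mul α).exp
    have h2 := h1.div_const α
    simp only [id] at h2
    exact h2.congr_deriv (by field_simp)
  rw [intervalIntegral.integral_eq_sub_of_hasDerivAt h]
  · ring
  · exact (Real.continuous_exp.comp (continuous_const.mul continuous_id)).intervalIntegrable a b

lemma tail_pos (gt : ℝ → ℝ) (hmeas : Measurable gt) (hnonneg : ∀ t, 0 ≤ gt t)
    (hmono : ∀ ⦃s u : ℝ⦄, 0 ≤ s → s ≤ u → gt u ≤ gt s)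
    (α t B : ℝ) (hα : 0 < α) (ht : 0 < t) (hB : 0 ≤ B)
    (hsub : ∫⁻ s, ENNReal.ofReal (Real.exp (α * s) * gt s) ≤ ENNReal.ofReal B) :
    gt t * ((Real.exp (α * t) - 1) / α) ≤ B := by
  have hcont : Continuous fun s : ℝ => Real.exp (α * s) * gt t :=
    (Real.continuous_exp.comp (continuous_const.mul continuous_id)).mul continuous_const
  have h1 : ∫⁻ s in Set.Ioc 0 t, ENNReal.ofReal (Real.exp (α * s) * gt t)
      ≤ ∫⁻ s in Set.Ioc 0 t, ENNReal.ofReal (Real.exp (α * s) * gt s) := by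
    refine setLIntegral_mono ?_ (fun s hs => ENNReal.ofReal_le_ofReal ?_)
    · exact (((measurable_const.mul measurable_id).exp.mul hmeas)).ennreal_ofReal
    · exact mul_le_mul_of_nonneg_left (hmono hs.1.le hs.2) (Real.exp_pos _).le
  have h2 : ∫⁻ s in Set.Ioc 0 t, ENNReal.ofReal (Real.exp (α * s) * gt s)
      ≤ ∫⁻ s, ENNReal.ofReal (Real.exp (α * s) * gt s) :=
    setLIntegral_le_lintegral _ _
  have hint : IntegrableOn (fun s : ℝ => Real.exp (α * s) * gt t) (Set.Ioc 0 t) volume :=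
    hcont.integrableOn_Ioc
  have h3 : ∫⁻ s in Set.Ioc 0 t, ENNReal.ofReal (Real.exp (α * s) * gt t)
      = ENNReal.ofReal (∫ s in Set.Ioc 0 t, Real.exp (α * s) * gt t) := by
    rw [MeasureTheory.ofReal_integral_eq_lintegral_ofReal hint]
    exact ae_of_all _ fun s => mul_nonneg (Real.exp_pos _).le (hnonneg t)
  have h4 : ∫ s in Set.Ioc 0 t, Real.exp (α * s) * gt t
      = ((Real.exp (α * t) - 1) / α) * gt t := by
    rw [← intervalIntegral.integral_of_le ht.le, intervalIntegral.integral_mul_const,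
      exp_intervalIntegral α 0 t (ne_of_gt hα)]
    simp
  have hfin : ENNReal.ofReal (gt t * ((Real.exp (α * t) - 1) / α)) ≤ ENNReal.ofReal B := by
    calc ENNReal.ofReal (gt t * ((Real.exp (α * t) - 1) / α))
        = ∫⁻ s in Set.Ioc 0 t, ENNReal.ofReal (Real.exp (α * s) * gt t) := by
          rw [h3, h4, mul_comm]
      _ ≤ _ := le_trans h1 (le_trans h2 hsub)
  have hnn : 0 ≤ gt t * ((Real.exp (α * t) - 1) / α) := by
    apply mul_nonneg (hnonneg t)
    apply div_nonneg _ hα.le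
    simp [Real.one_le_exp_iff, (mul_pos hα ht).le]
  exact (ENNReal.ofReal_le_ofReal_iff hB).mp hfin

lemma tail_neg (gt : ℝ → ℝ) (hmeas : Measurable gt) (hnonneg : ∀ t, 0 ≤ gt t)
    (hmono : ∀ ⦃s u : ℝ⦄, u ≤ s → s ≤ 0 → gt u ≤ gt s)
    (α t B : ℝ) (hα : α < 0) (ht : t < 0) (hB : 0 ≤ B)
    (hsub : ∫⁻ s, ENNReal.ofReal (Real.exp (α * s) * gt s) ≤ ENNReal.ofReal B) :
    gt t * ((1 - Real.exp (α * t)) / α) ≤ B := by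
  have hcont : Continuous fun s : ℝ => Real.exp (α * s) * gt t :=
    (Real.continuous_exp.comp (continuous_const.mul continuous_id)).mul continuous_const
  have h1 : ∫⁻ s in Set.Ioc t 0, ENNReal.ofReal (Real.exp (α * s) * gt t)
      ≤ ∫⁻ s in Set.Ioc t 0, ENNReal.ofReal (Real.exp (α * s) * gt s) := by
    refine setLIntegral_mono ?_ (fun s hs => ENNReal.ofReal_le_ofReal ?_)
    · exact (((measurable_const.mul measurable_id).exp.mul hmeas)).ennreal_ofReal
    · exact mul_le_mul_of_nonneg_left (hmono hs.1.le hs.2) (Real.exp_pos _).le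
  have h2 : ∫⁻ s in Set.Ioc t 0, ENNReal.ofReal (Real.exp (α * s) * gt s)
      ≤ ∫⁻ s, ENNReal.ofReal (Real.exp (α * s) * gt s) :=
    setLIntegral_le_lintegral _ _
  have hint : IntegrableOn (fun s : ℝ => Real.exp (α * s) * gt t) (Set.Ioc t 0) volume :=
    hcont.integrableOn_Ioc
  have h3 : ∫⁻ s in Set.Ioc t 0, ENNReal.ofReal (Real.exp (α * s) * gt t)
      = ENNReal.ofReal (∫ s in Set.Ioc t 0, Real.exp (α * s) * gt t) := by
    rw [MeasureTheory.ofReal_integral_eq_lintegral_ofReal hint]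
    exact ae_of_all _ fun s => mul_nonneg (Real.exp_pos _).le (hnonneg t)
  have h4 : ∫ s in Set.Ioc t 0, Real.exp (α * s) * gt t
      = ((1 - Real.exp (α * t)) / α) * gt t := by
    rw [← intervalIntegral.integral_of_le ht.le, intervalIntegral.integral_mul_const,
      exp_intervalIntegral α t 0 (ne_of_lt hα)]
    simp
  have hfin : ENNReal.ofReal (gt t * ((1 - Real.exp (α * t)) / α)) ≤ ENNReal.ofReal B := by
    calc ENNReal.ofReal (gt t * ((1 - Real.exp (α * t)) / α))
        = ∫⁻ s in Set.Ioc t 0, ENNReal.ofReal (Real.exp (α * s) * gt t) := by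
          rw [h3, h4, mul_comm]
      _ ≤ _ := le_trans h1 (le_trans h2 hsub)
  exact (ENNReal.ofReal_le_ofReal_iff hB).mp hfin

lemma decay (σ : ℝ) (hσ : 0 < σ)
    (gt : ℝ → ℝ) (hgt_meas : Measurable gt) (hgt_nonneg : ∀ t, 0 ≤ gt t)
    (hgt_mono_pos : ∀ ⦃s t : ℝ⦄, 0 ≤ s → s ≤ t → gt t ≤ gt s)
    (hgt_mono_neg : ∀ ⦃s t : ℝ⦄, t ≤ s → s ≤ 0 → gt t ≤ gt s)
    (hgt_subg : ∀ α : ℝ, ∫⁻ t, ENNReal.ofReal (Real.exp (α * t) * gt t) ≤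
      ENNReal.ofReal (Real.exp (σ ^ 2 * α ^ 2 / 2)))
    (t : ℝ) (ht : σ ≤ |t|) :
    gt t ≤ 2 * |t| / σ ^ 2 * Real.exp (-t ^ 2 / (2 * σ ^ 2)) := by
  have hσ2 : (0:ℝ) < σ ^ 2 := by positivity
  set u : ℝ := t ^ 2 / σ ^ 2 with hu
  have hu1 : 1 ≤ u := by
    rw [hu, le_div_iff₀ hσ2, one_mul]
    nlinarith [sq_abs t, abs_nonneg t]
  have hE : 2 ≤ Real.exp u := by
    calc (2:ℝ) = 1 + 1 := by norm_num
      _ ≤ Real.exp 1 := Real.add_one_le_exp 1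
      _ ≤ Real.exp u := Real.exp_le_exp.mpr hu1
  have he12 : Real.exp (u/2) * Real.exp (-(u/2)) = 1 := by
    rw [← Real.exp_add]; simp
  have heu : Real.exp u = Real.exp (u/2) * Real.exp (u/2) := by
    rw [← Real.exp_add]; ring_nf
  have hgoal_exp : Real.exp (-t ^ 2 / (2 * σ ^ 2)) = Real.exp (-(u/2)) := by
    congr 1; rw [hu]; field_simp
  have ht0 : t ≠ 0 := by
    intro h; rw [h] at ht; simp at ht; linarith
  set α : ℝ := t / σ ^ 2 with hα
  have hαt : α * t = u := by rw [hα, hu]; field_simp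
  have hB : Real.exp (σ ^ 2 * α ^ 2 / 2) = Real.exp (u/2) := by
    congr 1; rw [hα, hu]; field_simp
  have key : gt t * ((Real.exp u - 1) / (|t| / σ ^ 2)) ≤ Real.exp (u/2) := by
    rcases lt_or_gt_of_ne ht0 with htneg | htpos
    · have hαneg : α < 0 := div_neg_of_neg_of_pos htneg hσ2
      have := tail_neg gt hgt_meas hgt_nonneg hgt_mono_neg α t _ hαneg htneg
        (Real.exp_pos _).le (hgt_subg α)
      rw [hαt, hB] at this
      have habs : |t| = -t := abs_of_neg htneg
      calc gt t * ((Real.exp u - 1) / (|t| / σ ^ 2))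
          = gt t * ((1 - Real.exp u) / α) := by
            rw [habs, hα]; congr 1; rw [div_div_eq_mul_div, div_div_eq_mul_div]; ring
        _ ≤ _ := this
    · have hαpos : α > 0 := div_pos htpos hσ2
      have := tail_pos gt hgt_meas hgt_nonneg hgt_mono_pos α t _ hαpos htpos
        (Real.exp_pos _).le (hgt_subg α)
      rw [hαt, hB] at this
      rw [abs_of_pos htpos]
      exact this
  -- now algebra
  have habs_pos : 0 < |t| := abs_pos.mpr ht0
  have hβ : (0:ℝ) < |t| / σ ^ 2 := div_pos habs_pos hσ2
  have h6 : gt t * ((Real.exp u / 2) / (|t| / σ ^ 2)) ≤ Real.exp (u/2) := by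
    refine le_trans ?_ key
    gcongr
    · exact hgt_nonneg t
    · linarith
  rw [hgoal_exp]
  have h7 : gt t * Real.exp u ≤ 2 * (|t| / σ ^ 2) * Real.exp (u/2) := by
    have h := mul_le_mul_of_nonneg_right h6 (le_of_lt (mul_pos two_pos hβ))
    calc gt t * Real.exp u
        = gt t * (Real.exp u / 2 / (|t| / σ ^ 2)) * (2 * (|t| / σ ^ 2)) := by
          field_simp
      _ ≤ Real.exp (u/2) * (2 * (|t| / σ ^ 2)) := h
      _ = _ := by ring
  have hprod : Real.exp u * (Real.exp (-(u/2)) * Real.exp (-(u/2))) = 1 := by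
    rw [← Real.exp_add, ← Real.exp_add, show u + (-(u/2) + -(u/2)) = 0 by ring, Real.exp_zero]
  calc gt t = gt t * (Real.exp u * (Real.exp (-(u/2)) * Real.exp (-(u/2)))) := by
        rw [hprod, mul_one]
    _ = (gt t * Real.exp u) * (Real.exp (-(u/2)) * Real.exp (-(u/2))) := by ring
    _ ≤ (2 * (|t| / σ ^ 2) * Real.exp (u/2)) * (Real.exp (-(u/2)) * Real.exp (-(u/2))) := by
        exact mul_le_mul_of_nonneg_right h7 (by positivity)
    _ = 2 * (|t| / σ ^ 2) * ((Real.exp (u/2) * Real.exp (-(u/2))) * Real.exp (-(u/2))) := by ring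
    _ = 2 * (|t| / σ ^ 2) * Real.exp (-(u/2)) := by rw [he12, one_mul]
    _ = 2 * |t| / σ ^ 2 * Real.exp (-(u/2)) := by ring

/-- **One-dimensional subgaussian density bound** (Eq. (23) of the paper): with
`δ = min{1, 1/(4σ²)}`, if the density `g̃_σ` on `ℝ` is `σ`-subgaussian with mean zero,
bounded, and monotonically decreasing away from zero, then there is `c > 0` with
`g̃_σ(t) ≤ c · exp(2δ|t| − δ² − log δ) · φ̃_σ(t)` for all `t ∈ ℝ`, where `φ̃_σ` is the
density of `N(0, σ²)`. -/
theorem scalar_density_gaussian_bound (σ : ℝ) (hσ : 0 < σ)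
    (gt : ℝ → ℝ) (hgt_meas : Measurable gt) (hgt_nonneg : ∀ t, 0 ≤ gt t)
    (hgt_dens : ∫⁻ t, ENNReal.ofReal (gt t) = 1)
    (hgt_mean : (∫ t, t ∂(volume.withDensity fun t => ENNReal.ofReal (gt t))) = 0)
    (hgt_bdd : ∃ C : ℝ, ∀ t, gt t ≤ C)
    (hgt_mono_pos : ∀ ⦃s t : ℝ⦄, 0 ≤ s → s ≤ t → gt t ≤ gt s)
    (hgt_mono_neg : ∀ ⦃s t : ℝ⦄, t ≤ s → s ≤ 0 → gt t ≤ gt s)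
    (hgt_subg : ∀ α : ℝ, ∫⁻ t, ENNReal.ofReal (Real.exp (α * t) * gt t) ≤
      ENNReal.ofReal (Real.exp (σ ^ 2 * α ^ 2 / 2))) :
    ∃ c : ℝ, 0 < c ∧ ∀ t : ℝ,
      gt t ≤ c * Real.exp (2 * min 1 (1 / (4 * σ ^ 2)) * |t| - (min 1 (1 / (4 * σ ^ 2))) ^ 2
          - Real.log (min 1 (1 / (4 * σ ^ 2)))) *
        gaussianPDFReal 0 ⟨σ ^ 2, sq_nonneg σ⟩ t := by
  obtain ⟨C, hC⟩ := hgt_bdd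
  have hσ2 : (0:ℝ) < σ ^ 2 := by positivity
  set δ : ℝ := min 1 (1 / (4 * σ ^ 2)) with hδdef
  have hδpos : 0 < δ := lt_min one_pos (by positivity)
  have hδ1 : δ ≤ 1 := min_le_left _ _
  set S : ℝ := Real.sqrt (2 * Real.pi * σ ^ 2) with hSdef
  have hS : 0 < S := Real.sqrt_pos.mpr (by positivity)
  have hpdf : ∀ t : ℝ, gaussianPDFReal 0 ⟨σ ^ 2, sq_nonneg σ⟩ t
      = S⁻¹ * Real.exp (-t ^ 2 / (2 * σ ^ 2)) := by
    intro t
    simp [gaussianPDFReal, hSdef]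
    rfl
  set L : ℝ := Real.exp (-δ ^ 2 - Real.log δ) * S⁻¹ * Real.exp (-(1:ℝ)/2) with hLdef
  have hL : 0 < L := by positivity
  refine ⟨max ((max C 1) / L) (S * Real.exp 1 / σ ^ 2), ?_, ?_⟩
  · exact lt_max_of_lt_left (by positivity)
  intro t
  set c : ℝ := max ((max C 1) / L) (S * Real.exp 1 / σ ^ 2) with hcdef
  have hc : 0 < c := lt_max_of_lt_left (by positivity)
  rw [hpdf t]
  have hexp_split : Real.exp (2 * δ * |t| - δ ^ 2 - Real.log δ)
      = Real.exp (2 * δ * |t|) * Real.exp (-δ ^ 2) * δ⁻¹ := by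
    rw [Real.exp_sub, Real.exp_sub, Real.exp_log hδpos, Real.exp_neg]
    ring
  rcases le_total |t| σ with hts | hts
  · calc gt t ≤ max C 1 := le_trans (hC t) (le_max_left _ _)
      _ = ((max C 1) / L) * L := by field_simp
      _ ≤ c * L := mul_le_mul_of_nonneg_right (le_max_left _ _) hL.le
      _ = c * Real.exp (-δ ^ 2 - Real.log δ) * (S⁻¹ * Real.exp (-(1:ℝ)/2)) := by
          rw [hLdef]; ring
      _ ≤ c * Real.exp (2 * δ * |t| - δ ^ 2 - Real.log δ)
            * (S⁻¹ * Real.exp (-t ^ 2 / (2 * σ ^ 2))) := by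
          have hX : Real.exp (-δ ^ 2 - Real.log δ)
              ≤ Real.exp (2 * δ * |t| - δ ^ 2 - Real.log δ) :=
            Real.exp_le_exp.mpr (by nlinarith [mul_nonneg hδpos.le (abs_nonneg t)])
          have hY : Real.exp (-(1:ℝ)/2) ≤ Real.exp (-t ^ 2 / (2 * σ ^ 2)) := by
            apply Real.exp_le_exp.mpr
            rw [div_le_div_iff₀ (by norm_num : (0:ℝ) < 2) (by positivity)]
            nlinarith [sq_abs t, abs_nonneg t]
          exact mul_le_mul (mul_le_mul_of_nonneg_left hX hc.le)
            (mul_le_mul_of_nonneg_left hY (inv_nonneg.mpr hS.le))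
            (by positivity) (by positivity)
  · have hd := decay σ hσ gt hgt_meas hgt_nonneg hgt_mono_pos hgt_mono_neg hgt_subg t hts
    have h2t : 2 * |t| / σ ^ 2 ≤ Real.exp (2 * δ * |t|) / (δ * σ ^ 2) := by
      rw [div_le_div_iff₀ hσ2 (by positivity)]
      nlinarith [Real.add_one_le_exp (2 * δ * |t|), hσ2, abs_nonneg t,
        mul_nonneg hδpos.le (abs_nonneg t)]
    have he1 : (1:ℝ) ≤ Real.exp 1 * Real.exp (-δ ^ 2) := by
      rw [← Real.exp_add]
      calc (1:ℝ) = Real.exp 0 := Real.exp_zero.symm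
        _ ≤ _ := Real.exp_le_exp.mpr (by nlinarith)
    have hmain : Real.exp (2 * δ * |t|) / (δ * σ ^ 2)
        ≤ c * Real.exp (2 * δ * |t| - δ ^ 2 - Real.log δ) * S⁻¹ := by
      calc Real.exp (2 * δ * |t|) / (δ * σ ^ 2)
          = Real.exp (2 * δ * |t|) * 1 / (δ * σ ^ 2) := by ring
        _ ≤ Real.exp (2 * δ * |t|) * (Real.exp 1 * Real.exp (-δ ^ 2)) / (δ * σ ^ 2) := by
            gcongr
        _ = (S * Real.exp 1 / σ ^ 2) * (Real.exp (2 * δ * |t|) * Real.exp (-δ ^ 2) * δ⁻¹)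
              * S⁻¹ := by
            field_simp
        _ ≤ c * (Real.exp (2 * δ * |t|) * Real.exp (-δ ^ 2) * δ⁻¹) * S⁻¹ := by
            gcongr
            exact le_max_right _ _
        _ = c * Real.exp (2 * δ * |t| - δ ^ 2 - Real.log δ) * S⁻¹ := by rw [hexp_split]
    calc gt t ≤ 2 * |t| / σ ^ 2 * Real.exp (-t ^ 2 / (2 * σ ^ 2)) := hd
      _ ≤ (Real.exp (2 * δ * |t|) / (δ * σ ^ 2)) * Real.exp (-t ^ 2 / (2 * σ ^ 2)) :=
          mul_le_mul_of_nonneg_right h2t (Real.exp_pos _).le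
      _ ≤ (c * Real.exp (2 * δ * |t| - δ ^ 2 - Real.log δ) * S⁻¹)
            * Real.exp (-t ^ 2 / (2 * σ ^ 2)) :=
          mul_le_mul_of_nonneg_right hmain (Real.exp_pos _).le
      _ = c * Real.exp (2 * δ * |t| - δ ^ 2 - Real.log δ)
            * (S⁻¹ * Real.exp (-t ^ 2 / (2 * σ ^ 2))) := by ring
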